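/- For n = 1, …, N, let M_n ∈ ℝ^{d×d} be symmetric, let f_n : ℝ^d → ℝ be differentiable and M_n-matrix-smooth, and let z̄_n be a stationary point of f_n. Let π be a probability distribution on {1, …, N} with π(n) > 0 for all n, let u ∼ s where s is standardized with fourth moment κ = E[u₁⁴] < ∞, let n ∼ π independent of u, let T_w(u) = Cu + m, and let g = (1/π(n)) ∇_w f_n(T_w(u)) with respect to all d + d² parameters w = (m, C). Then E‖g‖₂² ≤ Σ_{n=1}^N (1/π(n)) ((d+1) ‖M_n(m − z̄_n)‖₂² + (d+κ) ‖M_n C‖_F²). -/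

import Mathlib

noncomputable section
set_option linter.unusedSectionVars false
set_option maxHeartbeats 1000000

open MeasureTheory ProbabilityTheory
open scoped RealInnerProductSpace ENNReal

/-- The affine reparameterization map `T_w(u) = C u + m`, where the parameter vector
`w ∈ ℝ^{d+d²}` collects the entries of `m` (at indices `Sum.inl i`) and of `C`
(at indices `Sum.inr (i, j)`). -/
def Tmap {d : ℕ} (w : EuclideanSpace ℝ (Fin d ⊕ Fin d × Fin d))
    (u : EuclideanSpace ℝ (Fin d)) : EuclideanSpace ℝ (Fin d) :=
  (WithLp.equiv 2 _).symm fun i => (∑ j, w (Sum.inr (i, j)) * u j) + w (Sum.inl i)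

/-- The parameter vector `w = (m, C) ∈ ℝ^{d+d²}`. -/
def param {d : ℕ} (m : EuclideanSpace ℝ (Fin d)) (C : Matrix (Fin d) (Fin d) ℝ) :
    EuclideanSpace ℝ (Fin d ⊕ Fin d × Fin d) :=
  (WithLp.equiv 2 _).symm (Sum.elim (fun i => m i) fun p => C p.1 p.2)

/-! ### Auxiliary facts about the gradient of `w ↦ f (Tmap w v)` -/

lemma euclid_norm_sq {ι : Type*} [Fintype ι] (x : EuclideanSpace ℝ ι) :
    ‖x‖^2 = ∑ i, x i ^ 2 := by
  rw [EuclideanSpace.norm_eq, Real.sq_sqrt (by positivity)]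
  simp [sq_abs]

def Tlin {d : ℕ} (v : EuclideanSpace ℝ (Fin d)) :
    EuclideanSpace ℝ (Fin d ⊕ Fin d × Fin d) →L[ℝ] EuclideanSpace ℝ (Fin d) :=
  LinearMap.toContinuousLinearMap
  { toFun := fun w => (WithLp.equiv 2 _).symm fun i => (∑ j, w (Sum.inr (i, j)) * v j) + w (Sum.inl i)
    map_add' := by
      intro w w'
      ext i
      simp only [WithLp.equiv_symm_apply, PiLp.toLp_apply, PiLp.add_apply, add_mul, Finset.sum_add_distrib]
      ring
    map_smul' := by
      intro c w
      ext i
      simp only [WithLp.equiv_symm_apply, PiLp.toLp_apply, PiLp.smul_apply, smul_eq_mul, RingHom.id_apply,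
        Finset.mul_sum, mul_add, mul_assoc] }

lemma Tlin_eq_Tmap {d : ℕ} (v : EuclideanSpace ℝ (Fin d)) (w) : Tlin v w = Tmap w v := rfl

lemma grad_comp_component {d : ℕ} (f : EuclideanSpace ℝ (Fin d) → ℝ) (hf : Differentiable ℝ f)
    (v : EuclideanSpace ℝ (Fin d)) (w0 : EuclideanSpace ℝ (Fin d ⊕ Fin d × Fin d))
    (idx : Fin d ⊕ Fin d × Fin d) :
    gradient (fun w => f (Tmap w v)) w0 idx =
      Sum.elim (fun i => gradient f (Tmap w0 v) i)
        (fun p => gradient f (Tmap w0 v) p.1 * v p.2) idx := by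
  have hcomp : (fun w => f (Tmap w v)) = f ∘ (Tlin v) := rfl
  have hfd : fderiv ℝ (fun w => f (Tmap w v)) w0
      = (fderiv ℝ f (Tlin v w0)).comp (Tlin v : _ →L[ℝ] _) := by
    rw [hcomp]
    rw [fderiv_comp w0 (hf _) (Tlin v).differentiableAt, (Tlin v).fderiv]
  have key : ∀ h, ⟪gradient (fun w => f (Tmap w v)) w0, h⟫
      = ⟪gradient f (Tmap w0 v), Tlin v h⟫ := by
    intro h
    rw [gradient, gradient, InnerProductSpace.toDual_symm_apply,
      InnerProductSpace.toDual_symm_apply, hfd]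
    rfl
  have h1 : gradient (fun w => f (Tmap w v)) w0 idx
      = ⟪gradient (fun w => f (Tmap w v)) w0, EuclideanSpace.single idx 1⟫ := by
    rw [EuclideanSpace.inner_single_right]
    simp
  rw [h1, key]
  rcases idx with i | ⟨i, j⟩
  · have : Tlin v (EuclideanSpace.single (Sum.inl i) 1) = EuclideanSpace.single i 1 := by
      ext i'
      simp [Tlin_eq_Tmap, Tmap, WithLp.equiv_symm_apply, PiLp.toLp_apply, EuclideanSpace.single_apply]
    rw [this, EuclideanSpace.inner_single_right]
    simp
  · have : Tlin v (EuclideanSpace.single (Sum.inr (i, j)) 1) = EuclideanSpace.single i (v j) := by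
      ext i'
      simp only [Tlin_eq_Tmap, Tmap, WithLp.equiv_symm_apply, PiLp.toLp_apply, EuclideanSpace.single_apply]
      by_cases h : i' = i
      · simp [h, Finset.sum_ite_eq']
      · simp [h]
    rw [this, EuclideanSpace.inner_single_right]
    simp [mul_comm]

lemma grad_norm_sq {d : ℕ} (f : EuclideanSpace ℝ (Fin d) → ℝ) (hf : Differentiable ℝ f)
    (v : EuclideanSpace ℝ (Fin d)) (w0 : EuclideanSpace ℝ (Fin d ⊕ Fin d × Fin d)) :
    ‖gradient (fun w => f (Tmap w v)) w0‖^2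
      = (1 + ∑ j, (v j)^2) * ∑ i, (gradient f (Tmap w0 v) i)^2 := by
  rw [euclid_norm_sq]
  rw [Fintype.sum_sum_type]
  simp only [grad_comp_component f hf v w0, Sum.elim_inl, Sum.elim_inr]
  rw [Fintype.sum_prod_type]
  have h1 : ∀ i : Fin d, (∑ j, (gradient f (Tmap w0 v) i * v j)^2)
      = gradient f (Tmap w0 v) i ^ 2 * ∑ j, (v j)^2 := by
    intro i
    rw [Finset.mul_sum]
    exact Finset.sum_congr rfl fun j _ => by ring
  rw [Finset.sum_congr rfl fun i _ => h1 i, ← Finset.sum_mul, add_mul, one_mul]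
  ring

lemma toEuc_apply {d : ℕ} (M : Matrix (Fin d) (Fin d) ℝ) (y : EuclideanSpace ℝ (Fin d)) (i : Fin d) :
    Matrix.toEuclideanLin M y i = ∑ j, M i j * y j := by
  rw [Matrix.toEuclideanLin_apply]
  simp [Matrix.mulVec, dotProduct]

/-! ### Moment computations -/

section moments
variable {Ω : Type*} [MeasurableSpace Ω] {μ : Measure Ω} [IsProbabilityMeasure μ]
  {d : ℕ} {u : Ω → EuclideanSpace ℝ (Fin d)}
  (hmeas : ∀ i, Measurable fun ω => u ω i)
  (hindep : iIndepFun (fun i ω => u ω i) μ)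
  (hmean : ∀ i, ∫ ω, u ω i ∂μ = 0)
  (hthird : ∀ i, ∫ ω, u ω i ^ 3 ∂μ = 0)
  (hvar : ∀ i, ∫ ω, u ω i ^ 2 ∂μ = 1)

lemma memL2mul (hL4 : ∀ i, MemLp (fun ω => u ω i) 4 μ) (k l : Fin d) :
    MemLp (fun ω => u ω k * u ω l) 2 μ := by
  have h : (1:ℝ≥0∞)/2 = 1/4 + 1/4 := by
    rw [ENNReal.div_add_div_same, ENNReal.div_eq_div_iff] <;> norm_num
  haveI : ENNReal.HolderTriple 4 4 2 := ⟨by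
    rw [show (4:ℝ≥0∞)⁻¹ = 1/4 from (one_div _).symm, show (2:ℝ≥0∞)⁻¹ = 1/2 from (one_div _).symm, h]⟩
  exact (hL4 l).smul (hL4 k)

lemma mem2sq (hL4 : ∀ i, MemLp (fun ω => u ω i) 4 μ) (j : Fin d) :
    MemLp (fun ω => u ω j ^ 2) 2 μ := by
  simpa [pow_two] using memL2mul hL4 j j

lemma intU (hL4 : ∀ i, MemLp (fun ω => u ω i) 4 μ) (k : Fin d) :
    Integrable (fun ω => u ω k) μ :=
  ((hL4 k).mono_exponent (by norm_num)).integrable le_rfl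

lemma intUU (hL4 : ∀ i, MemLp (fun ω => u ω i) 4 μ) (k l : Fin d) :
    Integrable (fun ω => u ω k * u ω l) μ :=
  ((memL2mul hL4 k l).mono_exponent (by norm_num)).integrable le_rfl

lemma intSqU (hL4 : ∀ i, MemLp (fun ω => u ω i) 4 μ) (j k : Fin d) :
    Integrable (fun ω => u ω j ^ 2 * u ω k) μ := by
  have h : (1:ℝ≥0∞)/1 = 1/2 + 1/2 := by
    rw [ENNReal.div_add_div_same, ENNReal.div_eq_div_iff] <;> norm_num
  have h2 : MemLp (fun ω => u ω k) 2 μ := (hL4 k).mono_exponent (by norm_num)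
  haveI : ENNReal.HolderTriple 2 2 1 := ⟨by
    rw [show (2:ℝ≥0∞)⁻¹ = 1/2 from (one_div _).symm, show (1:ℝ≥0∞)⁻¹ = 1/1 from (one_div _).symm, h]⟩
  exact (h2.smul (mem2sq hL4 j)).integrable le_rfl

lemma intSqUU (hL4 : ∀ i, MemLp (fun ω => u ω i) 4 μ) (j k l : Fin d) :
    Integrable (fun ω => u ω j ^ 2 * (u ω k * u ω l)) μ := by
  have h : (1:ℝ≥0∞)/1 = 1/2 + 1/2 := by
    rw [ENNReal.div_add_div_same, ENNReal.div_eq_div_iff] <;> norm_num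
  haveI : ENNReal.HolderTriple 2 2 1 := ⟨by
    rw [show (2:ℝ≥0∞)⁻¹ = 1/2 from (one_div _).symm, show (1:ℝ≥0∞)⁻¹ = 1/1 from (one_div _).symm, h]⟩
  exact ((memL2mul hL4 k l).smul (mem2sq hL4 j)).integrable le_rfl

lemma intSqSq (hL4 : ∀ i, MemLp (fun ω => u ω i) 4 μ) (j : Fin d) :
    Integrable (fun ω => u ω j ^ 2) μ := by
  simpa [pow_two] using intUU hL4 j j

include hmeas hindep hmean hthird hvar in
lemma mom2 (k l : Fin d) : ∫ ω, u ω k * u ω l ∂μ = if k = l then 1 else 0 := by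
  by_cases h : k = l
  · subst h
    rw [if_pos rfl, ← hvar k]
    apply integral_congr_ae
    filter_upwards with ω
    ring
  · rw [if_neg h]
    have hi : IndepFun (fun ω => u ω k) (fun ω => u ω l) μ := hindep.indepFun h
    rw [hi.integral_fun_mul_eq_mul_integral (hmeas k).aestronglyMeasurable (hmeas l).aestronglyMeasurable,
      hmean k, zero_mul]

include hmeas hindep hmean hthird hvar in
lemma mom3 (j k : Fin d) : ∫ ω, u ω j ^ 2 * u ω k ∂μ = 0 := by
  by_cases h : j = k
  · subst h
    rw [← hthird j]
    apply integral_congr_ae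
    filter_upwards with ω
    ring
  · have hi : IndepFun (fun ω => u ω j ^ 2) (fun ω => u ω k) μ :=
      (hindep.indepFun h).comp (measurable_id.pow_const 2) measurable_id
    rw [hi.integral_fun_mul_eq_mul_integral ((hmeas j).pow_const 2).aestronglyMeasurable
      (hmeas k).aestronglyMeasurable, hmean k, mul_zero]

include hmeas hindep hmean hthird hvar in
lemma mom4 {κ : ℝ} (hκ4 : ∀ i, ∫ ω, u ω i ^ 4 ∂μ = κ) (j k l : Fin d) :
    ∫ ω, u ω j ^ 2 * (u ω k * u ω l) ∂μ
      = if k = l then (if j = k then κ else 1) else 0 := by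
  by_cases hkl : k = l
  · subst hkl
    rw [if_pos rfl]
    by_cases hjk : j = k
    · subst hjk
      rw [if_pos rfl, ← hκ4 j]
      apply integral_congr_ae; filter_upwards with ω; ring
    · rw [if_neg hjk]
      have hi : IndepFun (fun ω => u ω j ^ 2) (fun ω => u ω k ^ 2) μ :=
        (hindep.indepFun hjk).comp (measurable_id.pow_const 2) (measurable_id.pow_const 2)
      have : ∫ ω, u ω j ^ 2 * (u ω k * u ω k) ∂μ = ∫ ω, u ω j ^ 2 * u ω k ^ 2 ∂μ := by
        apply integral_congr_ae; filter_upwards with ω; ring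
      rw [this, hi.integral_fun_mul_eq_mul_integral ((hmeas j).pow_const 2).aestronglyMeasurable
        ((hmeas k).pow_const 2).aestronglyMeasurable, hvar j, hvar k, one_mul]
  · rw [if_neg hkl]
    by_cases hjk : j = k
    · subst hjk
      have hjl : j ≠ l := hkl
      have hi : IndepFun (fun ω => u ω j ^ 3) (fun ω => u ω l) μ :=
        (hindep.indepFun hjl).comp (measurable_id.pow_const 3) measurable_id
      have : ∫ ω, u ω j ^ 2 * (u ω j * u ω l) ∂μ = ∫ ω, u ω j ^ 3 * u ω l ∂μ := by
        apply integral_congr_ae; filter_upwards with ω; ring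
      rw [this, hi.integral_fun_mul_eq_mul_integral ((hmeas j).pow_const 3).aestronglyMeasurable
        (hmeas l).aestronglyMeasurable, hthird j, zero_mul]
    · by_cases hjl : j = l
      · subst hjl
        have hi : IndepFun (fun ω => u ω j ^ 3) (fun ω => u ω k) μ :=
          (hindep.indepFun hjk).comp (measurable_id.pow_const 3) measurable_id
        have : ∫ ω, u ω j ^ 2 * (u ω k * u ω j) ∂μ = ∫ ω, u ω j ^ 3 * u ω k ∂μ := by
          apply integral_congr_ae; filter_upwards with ω; ring
        rw [this, hi.integral_fun_mul_eq_mul_integral ((hmeas j).pow_const 3).aestronglyMeasurable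
          (hmeas k).aestronglyMeasurable, hthird j, zero_mul]
      · have hpair : IndepFun (fun ω => (u ω j, u ω k)) (fun ω => u ω l) μ :=
          hindep.indepFun_prodMk hmeas j k l hjl hkl
        have hi : IndepFun (fun ω => u ω j ^ 2 * u ω k) (fun ω => u ω l) μ :=
          hpair.comp ((measurable_fst.pow_const 2).mul measurable_snd) measurable_id
        have : ∫ ω, u ω j ^ 2 * (u ω k * u ω l) ∂μ = ∫ ω, (u ω j ^ 2 * u ω k) * u ω l ∂μ := by
          apply integral_congr_ae; filter_upwards with ω; ring
        rw [this, hi.integral_fun_mul_eq_mul_integral (((hmeas j).pow_const 2).mul (hmeas k)).aestronglyMeasurable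
          (hmeas l).aestronglyMeasurable, hmean l, mul_zero]

lemma expand_sq (A : ℝ) (B : Fin d → ℝ) (ω : Ω) :
    (A + ∑ k, B k * u ω k)^2
      = A^2 + (∑ k, (2*A*B k) * u ω k) + ∑ k, ∑ l, (B k * B l) * (u ω k * u ω l) := by
  rw [add_sq, pow_two (∑ k, B k * u ω k), Finset.sum_mul_sum, Finset.mul_sum]
  congr 1
  · congr 1
    exact Finset.sum_congr rfl fun k _ => by ring
  · exact Finset.sum_congr rfl fun k _ => Finset.sum_congr rfl fun l _ => by ring

include hmeas hindep hmean hthird hvar in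
lemma lem_sq (hL4 : ∀ i, MemLp (fun ω => u ω i) 4 μ) (A : ℝ) (B : Fin d → ℝ) :
    ∫ ω, (A + ∑ k, B k * u ω k)^2 ∂μ = A^2 + ∑ k, (B k)^2 := by
  have h1 : Integrable (fun ω => ∑ k, (2*A*B k) * u ω k) μ :=
    integrable_finset_sum _ fun k _ => (intU hL4 k).const_mul _
  have h2 : Integrable (fun ω => ∑ k, ∑ l, (B k * B l) * (u ω k * u ω l)) μ :=
    integrable_finset_sum _ fun k _ =>
      integrable_finset_sum _ fun l _ => (intUU hL4 k l).const_mul _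
  rw [show (fun ω => (A + ∑ k, B k * u ω k)^2)
      = fun ω => A^2 + (∑ k, (2*A*B k) * u ω k) + ∑ k, ∑ l, (B k * B l) * (u ω k * u ω l)
    from funext fun ω => expand_sq A B ω]
  have ha : Integrable (fun ω => A^2 + ∑ k, (2*A*B k) * u ω k) μ :=
    (integrable_const _).add h1
  have e1 : ∀ k : Fin d, ∫ ω, (2*A*B k) * u ω k ∂μ = 0 := fun k => by
    rw [integral_const_mul _ _, hmean, mul_zero]
  have e2 : ∀ k : Fin d, ∫ ω, ∑ l, (B k * B l) * (u ω k * u ω l) ∂μ = (B k)^2 := fun k => by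
    rw [integral_finset_sum _ fun l _ => (intUU hL4 k l).const_mul _]
    have h3 : ∀ l : Fin d, ∫ ω, (B k * B l) * (u ω k * u ω l) ∂μ
        = (B k * B l) * (if k = l then 1 else 0) := fun l => by
      rw [integral_const_mul _ _, mom2 hmeas hindep hmean hthird hvar k l]
    rw [Finset.sum_congr rfl fun l _ => h3 l]
    simp [Finset.sum_ite_eq, pow_two]
  rw [integral_add ha h2, integral_add (integrable_const _) h1, integral_const,
    integral_finset_sum _ fun k _ => (intU hL4 k).const_mul _,
    integral_finset_sum _ fun k _ =>
      integrable_finset_sum _ fun l _ => (intUU hL4 k l).const_mul _]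
  simp [e1, e2]

lemma expand_sq2 (j : Fin d) (A : ℝ) (B : Fin d → ℝ) (ω : Ω) :
    u ω j ^ 2 * (A + ∑ k, B k * u ω k)^2
      = A^2 * u ω j ^ 2 + (∑ k, (2*A*B k) * (u ω j ^ 2 * u ω k))
        + ∑ k, ∑ l, (B k * B l) * (u ω j ^ 2 * (u ω k * u ω l)) := by
  rw [expand_sq A B ω, mul_add, mul_add, Finset.mul_sum, Finset.mul_sum]
  congr 1
  · congr 1
    · ring
    · exact Finset.sum_congr rfl fun k _ => by ring
  · refine Finset.sum_congr rfl fun k _ => ?_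
    rw [Finset.mul_sum]
    exact Finset.sum_congr rfl fun l _ => by ring

include hmeas hindep hmean hthird hvar in
lemma lem_sq2 {κ : ℝ} (hκ4 : ∀ i, ∫ ω, u ω i ^ 4 ∂μ = κ)
    (hL4 : ∀ i, MemLp (fun ω => u ω i) 4 μ) (j : Fin d) (A : ℝ) (B : Fin d → ℝ) :
    ∫ ω, u ω j ^ 2 * (A + ∑ k, B k * u ω k)^2 ∂μ
      = A^2 + ∑ k, (B k)^2 * (if j = k then κ else 1) := by
  have h0 : Integrable (fun ω => A^2 * u ω j ^ 2) μ := (intSqSq hL4 j).const_mul _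
  have h1 : Integrable (fun ω => ∑ k, (2*A*B k) * (u ω j ^ 2 * u ω k)) μ :=
    integrable_finset_sum _ fun k _ => (intSqU hL4 j k).const_mul _
  have h2 : Integrable (fun ω => ∑ k, ∑ l, (B k * B l) * (u ω j ^ 2 * (u ω k * u ω l))) μ :=
    integrable_finset_sum _ fun k _ =>
      integrable_finset_sum _ fun l _ => (intSqUU hL4 j k l).const_mul _
  have ha : Integrable (fun ω => A^2 * u ω j ^ 2 + ∑ k, (2*A*B k) * (u ω j ^ 2 * u ω k)) μ :=
    h0.add h1
  have e1 : ∀ k : Fin d, ∫ ω, (2*A*B k) * (u ω j ^ 2 * u ω k) ∂μ = 0 := fun k => by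
    rw [integral_const_mul _ _, mom3 hmeas hindep hmean hthird hvar j k, mul_zero]
  have e2 : ∀ k : Fin d, ∫ ω, ∑ l, (B k * B l) * (u ω j ^ 2 * (u ω k * u ω l)) ∂μ
      = (B k)^2 * (if j = k then κ else 1) := fun k => by
    rw [integral_finset_sum _ fun l _ => (intSqUU hL4 j k l).const_mul _]
    have h3 : ∀ l : Fin d, ∫ ω, (B k * B l) * (u ω j ^ 2 * (u ω k * u ω l)) ∂μ
        = (B k * B l) * (if k = l then (if j = k then κ else 1) else 0) := fun l => by
      rw [integral_const_mul _ _, mom4 hmeas hindep hmean hthird hvar hκ4 j k l]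
    rw [Finset.sum_congr rfl fun l _ => h3 l]
    simp [Finset.sum_ite_eq, pow_two, mul_assoc]
  rw [show (fun ω => u ω j ^ 2 * (A + ∑ k, B k * u ω k)^2)
      = fun ω => A^2 * u ω j ^ 2 + (∑ k, (2*A*B k) * (u ω j ^ 2 * u ω k))
        + ∑ k, ∑ l, (B k * B l) * (u ω j ^ 2 * (u ω k * u ω l))
    from funext fun ω => expand_sq2 j A B ω]
  rw [integral_add ha h2, integral_add h0 h1, integral_const_mul _ _, hvar j,
    integral_finset_sum _ fun k _ => (intSqU hL4 j k).const_mul _,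
    integral_finset_sum _ fun k _ =>
      integrable_finset_sum _ fun l _ => (intSqUU hL4 j k l).const_mul _]
  simp [e1, e2]

lemma int_sq (hL4 : ∀ i, MemLp (fun ω => u ω i) 4 μ) (A : ℝ) (B : Fin d → ℝ) :
    Integrable (fun ω => (A + ∑ k, B k * u ω k)^2) μ := by
  rw [show (fun ω => (A + ∑ k, B k * u ω k)^2)
      = fun ω => A^2 + (∑ k, (2*A*B k) * u ω k) + ∑ k, ∑ l, (B k * B l) * (u ω k * u ω l)
    from funext fun ω => expand_sq A B ω]
  exact ((integrable_const _).add (integrable_finset_sum _ fun k _ =>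
      (intU hL4 k).const_mul _)).add
    (integrable_finset_sum _ fun k _ =>
      integrable_finset_sum _ fun l _ => (intUU hL4 k l).const_mul _)

lemma int_sq2 (hL4 : ∀ i, MemLp (fun ω => u ω i) 4 μ) (j : Fin d) (A : ℝ) (B : Fin d → ℝ) :
    Integrable (fun ω => u ω j ^ 2 * (A + ∑ k, B k * u ω k)^2) μ := by
  rw [show (fun ω => u ω j ^ 2 * (A + ∑ k, B k * u ω k)^2)
      = fun ω => A^2 * u ω j ^ 2 + (∑ k, (2*A*B k) * (u ω j ^ 2 * u ω k))
        + ∑ k, ∑ l, (B k * B l) * (u ω j ^ 2 * (u ω k * u ω l))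
    from funext fun ω => expand_sq2 j A B ω]
  exact (((intSqSq hL4 j).const_mul _).add (integrable_finset_sum _ fun k _ =>
      (intSqU hL4 j k).const_mul _)).add
    (integrable_finset_sum _ fun k _ =>
      integrable_finset_sum _ fun l _ => (intSqUU hL4 j k l).const_mul _)

lemma split_main (A : Fin d → ℝ) (B : Fin d → Fin d → ℝ) (ω : Ω) :
    (1 + ∑ j, u ω j ^ 2) * (∑ i, (A i + ∑ k, B i k * u ω k)^2)
      = (∑ i, (A i + ∑ k, B i k * u ω k)^2)
        + ∑ j, ∑ i, u ω j ^ 2 * (A i + ∑ k, B i k * u ω k)^2 := by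
  rw [add_mul, one_mul, Finset.sum_mul]
  congr 1
  exact Finset.sum_congr rfl fun j _ => by rw [Finset.mul_sum]

lemma integrable_main (hL4 : ∀ i, MemLp (fun ω => u ω i) 4 μ)
    (A : Fin d → ℝ) (B : Fin d → Fin d → ℝ) :
    Integrable (fun ω => (1 + ∑ j, u ω j ^ 2) * (∑ i, (A i + ∑ k, B i k * u ω k)^2)) μ := by
  rw [show (fun ω => (1 + ∑ j, u ω j ^ 2) * (∑ i, (A i + ∑ k, B i k * u ω k)^2))
      = fun ω => (∑ i, (A i + ∑ k, B i k * u ω k)^2)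
        + ∑ j, ∑ i, u ω j ^ 2 * (A i + ∑ k, B i k * u ω k)^2
    from funext fun ω => split_main A B ω]
  exact (integrable_finset_sum _ fun i _ => int_sq hL4 (A i) (B i)).add
    (integrable_finset_sum _ fun j _ =>
      integrable_finset_sum _ fun i _ => int_sq2 hL4 j (A i) (B i))

lemma alg_main {κ : ℝ} (A : Fin d → ℝ) (B : Fin d → Fin d → ℝ) :
    (∑ i, (A i ^ 2 + ∑ k, (B i k)^2))
      + (∑ j : Fin d, ∑ i, (A i ^ 2 + ∑ k, (B i k)^2 * (if j = k then κ else 1)))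
    = ((d:ℝ) + 1) * (∑ i, (A i)^2) + ((d:ℝ) + κ) * ∑ i, ∑ k, (B i k)^2 := by
  have hc : (∑ j : Fin d, ∑ i, (A i ^ 2 + ∑ k, (B i k)^2 * (if j = k then κ else 1)))
      = ∑ i, ∑ j : Fin d, (A i ^ 2 + ∑ k, (B i k)^2 * (if j = k then κ else 1)) :=
    Finset.sum_comm
  have hj : ∀ k : Fin d, (∑ j : Fin d, (if j = k then κ else (1:ℝ))) = (d:ℝ) - 1 + κ := by
    intro k
    have : ∀ j : Fin d, (if j = k then κ else (1:ℝ)) = 1 + (if j = k then κ - 1 else 0) := by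
      intro j; by_cases h : j = k <;> simp [h]
    rw [Finset.sum_congr rfl fun j _ => this j, Finset.sum_add_distrib, Finset.sum_const,
      Finset.card_univ, Fintype.card_fin, nsmul_eq_mul, Finset.sum_ite_eq',
      if_pos (Finset.mem_univ k)]
    ring
  have key : ∀ i : Fin d, (∑ j : Fin d, (A i ^ 2 + ∑ k, (B i k)^2 * (if j = k then κ else 1)))
      = (d:ℝ) * A i ^ 2 + ((d:ℝ) - 1 + κ) * ∑ k, (B i k)^2 := by
    intro i
    rw [Finset.sum_add_distrib, Finset.sum_const, Finset.card_univ, Fintype.card_fin,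
      nsmul_eq_mul, Finset.sum_comm]
    congr 1
    rw [Finset.mul_sum]
    refine Finset.sum_congr rfl fun k _ => ?_
    rw [← Finset.mul_sum, hj k]
    ring
  rw [hc, Finset.sum_congr rfl fun i _ => key i, ← Finset.sum_add_distrib]
  have per_i : ∀ i : Fin d, (A i ^ 2 + ∑ k, (B i k)^2)
      + ((d:ℝ) * A i ^ 2 + ((d:ℝ) - 1 + κ) * ∑ k, (B i k)^2)
      = ((d:ℝ) + 1) * A i ^ 2 + ((d:ℝ) + κ) * ∑ k, (B i k)^2 := fun i => by ring
  rw [Finset.sum_congr rfl fun i _ => per_i i, Finset.sum_add_distrib, ← Finset.mul_sum,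
    ← Finset.mul_sum]

include hmeas hindep hmean hthird hvar in
lemma moment_main {κ : ℝ} (hκ4 : ∀ i, ∫ ω, u ω i ^ 4 ∂μ = κ)
    (hL4 : ∀ i, MemLp (fun ω => u ω i) 4 μ) (A : Fin d → ℝ) (B : Fin d → Fin d → ℝ) :
    ∫ ω, (1 + ∑ j, u ω j ^ 2) * (∑ i, (A i + ∑ k, B i k * u ω k)^2) ∂μ
      = ((d:ℝ) + 1) * (∑ i, (A i)^2) + ((d:ℝ) + κ) * ∑ i, ∑ k, (B i k)^2 := by
  rw [show (fun ω => (1 + ∑ j, u ω j ^ 2) * (∑ i, (A i + ∑ k, B i k * u ω k)^2))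
      = fun ω => (∑ i, (A i + ∑ k, B i k * u ω k)^2)
        + ∑ j, ∑ i, u ω j ^ 2 * (A i + ∑ k, B i k * u ω k)^2
    from funext fun ω => split_main A B ω]
  have E1 : ∫ ω, (∑ i, (A i + ∑ k, B i k * u ω k)^2) ∂μ
      = ∑ i, (A i ^ 2 + ∑ k, (B i k)^2) := by
    rw [integral_finset_sum _ fun i _ => int_sq hL4 (A i) (B i)]
    exact Finset.sum_congr rfl fun i _ => lem_sq hmeas hindep hmean hthird hvar hL4 (A i) (B i)
  have E2 : ∫ ω, (∑ j, ∑ i, u ω j ^ 2 * (A i + ∑ k, B i k * u ω k)^2) ∂μ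
      = ∑ j : Fin d, ∑ i, (A i ^ 2 + ∑ k, (B i k)^2 * (if j = k then κ else 1)) := by
    rw [integral_finset_sum _ fun j _ =>
      integrable_finset_sum _ fun i _ => int_sq2 hL4 j (A i) (B i)]
    refine Finset.sum_congr rfl fun j _ => ?_
    rw [integral_finset_sum _ fun i _ => int_sq2 hL4 j (A i) (B i)]
    exact Finset.sum_congr rfl fun i _ =>
      lem_sq2 hmeas hindep hmean hthird hvar hκ4 hL4 j (A i) (B i)
  rw [integral_add (integrable_finset_sum _ fun i _ => int_sq hL4 (A i) (B i))
    (integrable_finset_sum _ fun j _ =>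
      integrable_finset_sum _ fun i _ => int_sq2 hL4 j (A i) (B i)), E1, E2]
  exact alg_main A B

end moments

/-- subsampling bound. If each `fₙ` is `Mₙ`-matrix-smooth with stationary
point `z̄ₙ`, `u` is standardized with fourth moment `κ`, and `n ∼ π` is sampled
independently of `u`, then the estimator `g = (1/π(n)) ∇_w fₙ(T_w(u))` satisfies
`E‖g‖₂² ≤ Σₙ (1/π(n)) ((d+1)‖Mₙ(m − z̄ₙ)‖₂² + (d+κ)‖Mₙ C‖_F²)`. -/
theorem stmt_13 {Ω : Type*} [MeasurableSpace Ω] (μ : Measure Ω) [IsProbabilityMeasure μ]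
    (d N : ℕ) (hd : 0 < d) (hN : 0 < N)
    (u : Ω → EuclideanSpace ℝ (Fin d)) (hmeasu : Measurable u)
    (hmeas : ∀ i, Measurable fun ω => u ω i)
    (hindep : iIndepFun (fun i ω => u ω i) μ)
    (hident : ∀ i j : Fin d, IdentDistrib (fun ω => u ω i) (fun ω => u ω j) μ μ)
    (hmean : ∀ i, ∫ ω, u ω i ∂μ = 0)
    (hthird : ∀ i, ∫ ω, u ω i ^ 3 ∂μ = 0)
    (hvar : ∀ i, ∫ ω, u ω i ^ 2 ∂μ = 1)
    (hL4 : ∀ i, MemLp (fun ω => u ω i) 4 μ)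
    (κ : ℝ) (hκ : κ = ∫ ω, u ω ⟨0, hd⟩ ^ 4 ∂μ)
    (M : Fin N → Matrix (Fin d) (Fin d) ℝ) (hMsymm : ∀ n, (M n).IsSymm)
    (f : Fin N → EuclideanSpace ℝ (Fin d) → ℝ) (hf : ∀ n, Differentiable ℝ (f n))
    (hsmooth : ∀ n, ∀ y z : EuclideanSpace ℝ (Fin d),
      ‖gradient (f n) y - gradient (f n) z‖ ≤ ‖Matrix.toEuclideanLin (M n) (y - z)‖)
    (zbar : Fin N → EuclideanSpace ℝ (Fin d)) (hstat : ∀ n, gradient (f n) (zbar n) = 0)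
    (π : Fin N → ℝ) (hπpos : ∀ n, 0 < π n) (hπsum : ∑ n, π n = 1)
    (ν : Ω → Fin N) (hν : Measurable ν)
    (hνdist : ∀ n, μ (ν ⁻¹' {n}) = ENNReal.ofReal (π n))
    (hνindep : IndepFun ν u μ)
    (m : EuclideanSpace ℝ (Fin d)) (C : Matrix (Fin d) (Fin d) ℝ) :
    ∫ ω, ‖(π (ν ω))⁻¹ •
        gradient (fun w' => f (ν ω) (Tmap w' (u ω))) (param m C)‖ ^ 2 ∂μ
      ≤ ∑ n, (π n)⁻¹ *
          (((d : ℝ) + 1) * ‖Matrix.toEuclideanLin (M n) (m - zbar n)‖ ^ 2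
            + ((d : ℝ) + κ) * ∑ i, ∑ j, (M n * C) i j ^ 2) := by
  classical
  have hκ4 : ∀ i, ∫ ω, u ω i ^ 4 ∂μ = κ := by
    intro i
    rw [hκ]
    exact ((hident i ⟨0, hd⟩).comp (measurable_id.pow_const 4)).integral_eq
  set A : Fin N → Fin d → ℝ := fun n i => ∑ j, M n i j * (m j - zbar n j) with hA
  set Bm : Fin N → Fin d → Fin d → ℝ := fun n i k => ∑ j, M n i j * C j k with hBm
  set H : Fin N → EuclideanSpace ℝ (Fin d) → ℝ := fun n x =>
    (1 + ∑ j, x j ^ 2) * (∑ i, (A n i + ∑ k, Bm n i k * x k)^2) with hH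
  -- component formula for Tmap (param m C)
  have hTj : ∀ (x : EuclideanSpace ℝ (Fin d)) (j : Fin d),
      Tmap (param m C) x j = (∑ k, C j k * x k) + m j := by
    intro x j
    simp [Tmap, param, WithLp.equiv_symm_apply, PiLp.toLp_apply]
  -- the smoothness RHS in coordinates
  have hEnorm : ∀ n (x : EuclideanSpace ℝ (Fin d)),
      ‖Matrix.toEuclideanLin (M n) (Tmap (param m C) x - zbar n)‖^2
        = ∑ i, (A n i + ∑ k, Bm n i k * x k)^2 := by
    intro n x
    rw [euclid_norm_sq]
    refine Finset.sum_congr rfl fun i _ => ?_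
    rw [toEuc_apply]
    congr 1
    have hterm : ∀ j, M n i j * (Tmap (param m C) x - zbar n) j
        = (∑ k, (M n i j * C j k) * x k) + M n i j * (m j - zbar n j) := by
      intro j
      rw [PiLp.sub_apply, hTj x j]
      rw [show M n i j * ((∑ k, C j k * x k) + m j - zbar n j)
          = M n i j * (∑ k, C j k * x k) + M n i j * (m j - zbar n j) by ring]
      congr 1
      rw [Finset.mul_sum]
      exact Finset.sum_congr rfl fun k _ => by ring
    rw [Finset.sum_congr rfl fun j _ => hterm j, Finset.sum_add_distrib, Finset.sum_comm]
    rw [add_comm]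
    congr 1
    exact Finset.sum_congr rfl fun k _ => by rw [Finset.sum_mul]
  -- pointwise bound
  have hpt : ∀ ω, ‖(π (ν ω))⁻¹ •
        gradient (fun w' => f (ν ω) (Tmap w' (u ω))) (param m C)‖ ^ 2
      ≤ ((π (ν ω))⁻¹)^2 * H (ν ω) (u ω) := by
    intro ω
    rw [norm_smul, mul_pow, Real.norm_eq_abs, sq_abs]
    refine mul_le_mul_of_nonneg_left ?_ (sq_nonneg _)
    rw [grad_norm_sq (f (ν ω)) (hf (ν ω)) (u ω) (param m C)]
    refine mul_le_mul_of_nonneg_left ?_ (by positivity)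
    have h1 : (∑ i, (gradient (f (ν ω)) (Tmap (param m C) (u ω)) i)^2)
        = ‖gradient (f (ν ω)) (Tmap (param m C) (u ω))‖^2 := (euclid_norm_sq _).symm
    rw [h1, ← hEnorm (ν ω) (u ω)]
    have h2 := hsmooth (ν ω) (Tmap (param m C) (u ω)) (zbar (ν ω))
    rw [hstat (ν ω), sub_zero] at h2
    exact pow_le_pow_left₀ (norm_nonneg _) h2 2
  -- measurability of H n
  have hcoord : ∀ j : Fin d, Measurable fun x : EuclideanSpace ℝ (Fin d) => x j :=
    fun j => (PiLp.continuous_apply (p := 2) (β := fun _ : Fin d => ℝ) j).measurable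
  have hHmeas : ∀ n, Measurable (H n) := by
    intro n
    apply Measurable.mul
    · exact measurable_const.add (Finset.measurable_sum _ fun j _ => (hcoord j).pow_const 2)
    · exact Finset.measurable_sum _ fun i _ =>
        (measurable_const.add (Finset.measurable_sum _ fun k _ =>
          (hcoord k).const_mul _)).pow_const 2
  have hHint : ∀ n, Integrable (fun ω => H n (u ω)) μ := fun n =>
    integrable_main hL4 (A n) (Bm n)
  -- dominating function
  set G : Ω → ℝ := fun ω =>
    ∑ n, Set.indicator (ν ⁻¹' {n}) (fun ω' => ((π n)⁻¹)^2 * H n (u ω')) ω with hG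
  have hGeq : ∀ ω, G ω = ((π (ν ω))⁻¹)^2 * H (ν ω) (u ω) := by
    intro ω
    simp only [hG]
    rw [Finset.sum_eq_single (ν ω)]
    · rw [Set.indicator_of_mem (by simp : ω ∈ ν ⁻¹' {ν ω})]
    · intro b _ hb
      exact Set.indicator_of_notMem (by simp [hb.symm]) _
    · intro h
      exact absurd (Finset.mem_univ _) h
  have hGint : Integrable G μ := by
    rw [hG]
    exact integrable_finset_sum _ fun n _ =>
      (((hHint n).const_mul _).indicator (hν (measurableSet_singleton n)))
  have hmono : ∫ ω, ‖(π (ν ω))⁻¹ •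
        gradient (fun w' => f (ν ω) (Tmap w' (u ω))) (param m C)‖ ^ 2 ∂μ
      ≤ ∫ ω, G ω ∂μ := by
    refine integral_mono_of_nonneg (ae_of_all _ fun ω => by positivity) hGint
      (ae_of_all _ fun ω => ?_)
    rw [hGeq ω]
    exact hpt ω
  refine hmono.trans ?_
  -- compute the integral of G
  have hper : ∀ n : Fin N,
      ∫ ω, Set.indicator (ν ⁻¹' {n}) (fun ω' => ((π n)⁻¹)^2 * H n (u ω')) ω ∂μ
        = ((π n)⁻¹)^2 * (π n * (((d:ℝ) + 1) * (∑ i, (A n i)^2)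
            + ((d:ℝ) + κ) * ∑ i, ∑ k, (Bm n i k)^2)) := by
    intro n
    have hptw : ∀ ω, Set.indicator (ν ⁻¹' {n}) (fun ω' => ((π n)⁻¹)^2 * H n (u ω')) ω
        = ((π n)⁻¹)^2 * ((if ν ω = n then (1:ℝ) else 0) * H n (u ω)) := by
      intro ω
      by_cases h : ν ω = n
      · rw [Set.indicator_of_mem (by simp [h])]
        simp [h]
      · rw [Set.indicator_of_notMem (by simp [h])]
        simp [h]
    rw [show (fun ω => Set.indicator (ν ⁻¹' {n}) (fun ω' => ((π n)⁻¹)^2 * H n (u ω')) ω)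
        = fun ω => ((π n)⁻¹)^2 * ((if ν ω = n then (1:ℝ) else 0) * H n (u ω))
      from funext hptw]
    rw [integral_const_mul _ _]
    congr 1
    have hIF : IndepFun (fun ω => if ν ω = n then (1:ℝ) else 0) (fun ω => H n (u ω)) μ :=
      hνindep.comp (Measurable.of_discrete (f := fun n' : Fin N => if n' = n then (1:ℝ) else 0)) (hHmeas n)
    rw [hIF.integral_fun_mul_eq_mul_integral ((Measurable.of_discrete (f := fun n' : Fin N => if n' = n then (1:ℝ) else 0)).comp
        hν).aestronglyMeasurable ((hHmeas n).comp hmeasu).aestronglyMeasurable]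
    have hind : ∫ ω, (if ν ω = n then (1:ℝ) else 0) ∂μ = π n := by
      rw [show (fun ω => if ν ω = n then (1:ℝ) else 0)
          = Set.indicator (ν ⁻¹' {n}) (fun _ => (1:ℝ)) from funext fun ω => by
        by_cases h : ν ω = n <;> simp [Set.indicator, h]]
      rw [integral_indicator_const _ (hν (measurableSet_singleton n)), measureReal_def, hνdist n, smul_eq_mul,
        mul_one, ENNReal.toReal_ofReal (hπpos n).le]
    have hmom : ∫ ω, H n (u ω) ∂μ
        = ((d:ℝ) + 1) * (∑ i, (A n i)^2) + ((d:ℝ) + κ) * ∑ i, ∑ k, (Bm n i k)^2 :=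
      moment_main hmeas hindep hmean hthird hvar hκ4 hL4 (A n) (Bm n)
    rw [hind]
    rw [hmom]
  rw [hG, integral_finset_sum _ fun n _ =>
    (((hHint n).const_mul _).indicator (hν (measurableSet_singleton n)))]
  rw [Finset.sum_congr rfl fun n _ => hper n]
  refine le_of_eq (Finset.sum_congr rfl fun n _ => ?_)
  have hAeq : ‖Matrix.toEuclideanLin (M n) (m - zbar n)‖^2 = ∑ i, (A n i)^2 := by
    rw [euclid_norm_sq]
    refine Finset.sum_congr rfl fun i _ => ?_
    rw [toEuc_apply]
    simp [PiLp.sub_apply, hA]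
  have hBeq : (∑ i, ∑ j, (M n * C) i j ^ 2) = ∑ i, ∑ k, (Bm n i k)^2 := by
    refine Finset.sum_congr rfl fun i _ => Finset.sum_congr rfl fun j _ => ?_
    rw [Matrix.mul_apply]
  rw [hAeq, hBeq]
  have hπ : π n ≠ 0 := (hπpos n).ne'
  field_simp
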